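/- Let φ be an admissible function. Then there is a constant C (depending only on φ) such that for every y ≥ 1, sup over x ∈ [1,∞) of φ(x)·e^{−x/y} is at most C·φ(y). -/

import Mathlib

open Real

theorem stmt8 (φ : ℝ → ℝ) (γ β : ℝ) (hγ : 0 < γ) (hβ : 0 < β)
    (hmap : ∀ x : ℝ, 1 ≤ x → 1 ≤ φ x)
    (hφ1 : φ 1 = 1)
    (hconc : ConcaveOn ℝ (Set.Ici (1 : ℝ)) (fun x => Real.log (φ x)))
    (hder : ∀ x : ℝ, 1 ≤ x → γ / x ≤ deriv φ x / φ x ∧ deriv φ x / φ x ≤ β / x) :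
    ∃ C : ℝ, 0 < C ∧ ∀ y : ℝ, 1 ≤ y →
      sSup ((fun x => φ x * Real.exp (-x / y)) '' Set.Ici 1) ≤ C * φ y := by
  have hpos : ∀ x : ℝ, 1 ≤ x → 0 < φ x := fun x hx => lt_of_lt_of_le one_pos (hmap x hx)
  have hdiff : ∀ x : ℝ, 1 ≤ x → DifferentiableAt ℝ φ x := by
    intro x hx
    by_contra h
    have h0 : deriv φ x = 0 := deriv_zero_of_not_differentiableAt h
    have := (hder x hx).1
    rw [h0, zero_div] at this
    exact absurd this (not_le.2 (div_pos hγ (lt_of_lt_of_le one_pos hx)))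
  -- g(x) = log φ(x) - β log x is antitone on [1, ∞)
  set g : ℝ → ℝ := fun x => Real.log (φ x) - β * Real.log x with hg
  have hgder : ∀ x : ℝ, 1 ≤ x → HasDerivAt g (deriv φ x / φ x - β / x) x := by
    intro x hx
    have hx0 : (0:ℝ) < x := lt_of_lt_of_le one_pos hx
    have h1 : HasDerivAt (fun x => Real.log (φ x)) (deriv φ x / φ x) x :=
      ((hdiff x hx).hasDerivAt).log (hpos x hx).ne'
    have h2 : HasDerivAt (fun x => β * Real.log x) (β * x⁻¹) x :=
      (Real.hasDerivAt_log hx0.ne').const_mul β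
    have := h1.fun_sub h2
    simpa [div_eq_mul_inv] using this
  have hganti : AntitoneOn g (Set.Ici 1) := by
    apply antitoneOn_of_hasDerivWithinAt_nonpos (f' := fun x => deriv φ x / φ x - β / x)
      (convex_Ici 1)
    · intro x hx
      exact (hgder x hx).continuousAt.continuousWithinAt
    · intro x hx
      rw [interior_Ici] at hx
      exact (hgder x (le_of_lt hx)).hasDerivWithinAt
    · intro x hx
      rw [interior_Ici] at hx
      have := (hder x (le_of_lt hx)).2
      linarith
  -- φ is monotone on [1, ∞)
  have hmono : MonotoneOn φ (Set.Ici 1) := by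
    apply monotoneOn_of_hasDerivWithinAt_nonneg (f' := fun x => deriv φ x) (convex_Ici 1)
    · intro x hx
      exact (hdiff x hx).continuousAt.continuousWithinAt
    · intro x hx
      rw [interior_Ici] at hx
      exact (hdiff x (le_of_lt hx)).hasDerivAt.hasDerivWithinAt
    · intro x hx
      rw [interior_Ici] at hx
      have h1 := (hder x (le_of_lt hx)).1
      have hx0 : (0:ℝ) < x := lt_trans one_pos hx
      have : 0 < deriv φ x / φ x := lt_of_lt_of_le (div_pos hγ hx0) h1
      have := (div_pos_iff.1 this)
      rcases this with ⟨h, _⟩ | ⟨_, h⟩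
      · exact le_of_lt h
      · exact absurd (hpos x (le_of_lt hx)) (not_lt.2 (le_of_lt h))
  -- The constant
  set n : ℕ := ⌈β⌉₊ with hn
  refine ⟨(Nat.factorial n : ℝ), by positivity, ?_⟩
  intro y hy
  have hy0 : (0:ℝ) < y := lt_of_lt_of_le one_pos hy
  have hC1 : (1:ℝ) ≤ (Nat.factorial n : ℝ) := by exact_mod_cast Nat.one_le_iff_ne_zero.2 (Nat.factorial_ne_zero n)
  apply Real.sSup_le
  · rintro z ⟨x, hx, rfl⟩
    simp only [Set.mem_Ici] at hx
    have hx0 : (0:ℝ) < x := lt_of_lt_of_le one_pos hx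
    rcases le_total x y with hxy | hxy
    · -- x ≤ y : φ x ≤ φ y, exp ≤ 1
      have h1 : φ x ≤ φ y := hmono hx (le_trans hx hxy) hxy
      have h2 : Real.exp (-x / y) ≤ 1 := by
        rw [Real.exp_le_one_iff]
        apply div_nonpos_of_nonpos_of_nonneg <;> linarith
      calc φ x * Real.exp (-x / y) ≤ φ y * 1 :=
            mul_le_mul h1 h2 (Real.exp_pos _).le (hpos y hy).le
        _ ≤ (Nat.factorial n : ℝ) * φ y := by nlinarith [hpos y hy]
    · -- y ≤ x : φ x ≤ φ y * (x/y)^β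
      set t : ℝ := x / y with ht
      have ht1 : (1:ℝ) ≤ t := (one_le_div hy0).2 hxy
      have ht0 : (0:ℝ) < t := lt_of_lt_of_le one_pos ht1
      have hgle : g x ≤ g y := hganti hy (le_trans hy hxy) hxy
      have hφx : φ x ≤ φ y * t ^ β := by
        have h1 : Real.log (φ x) ≤ Real.log (φ y) + β * Real.log t := by
          have hlt : Real.log t = Real.log x - Real.log y := Real.log_div hx0.ne' hy0.ne'
          simp only [hg] at hgle
          rw [hlt]; linarith
        have h2 : Real.log (φ y * t ^ β) = Real.log (φ y) + β * Real.log t := by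
          rw [Real.log_mul (hpos y hy).ne' (by positivity), Real.log_rpow ht0]
        rw [← Real.exp_log (hpos x hx), ← Real.exp_log (mul_pos (hpos y hy) (Real.rpow_pos_of_pos ht0 β))]
        exact Real.exp_le_exp.2 (by rw [h2]; exact h1)
      have htn : t ^ β ≤ t ^ (n : ℝ) :=
        Real.rpow_le_rpow_of_exponent_le ht1 (by exact_mod_cast Nat.le_ceil β)
      have hfac : t ^ (n : ℕ) ≤ (Nat.factorial n : ℝ) * Real.exp t := by
        have := Real.pow_div_factorial_le_exp t ht0.le n
        rw [div_le_iff₀ (by positivity)] at this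
        linarith [this]
      have hexp : Real.exp (-x / y) = (Real.exp t)⁻¹ := by
        rw [← Real.exp_neg]; ring_nf; simp [ht, div_eq_mul_inv]
      calc φ x * Real.exp (-x / y) ≤ (φ y * t ^ β) * Real.exp (-x / y) := by
            apply mul_le_mul_of_nonneg_right hφx (Real.exp_pos _).le
        _ ≤ (φ y * ((Nat.factorial n : ℝ) * Real.exp t)) * (Real.exp t)⁻¹ := by
            rw [hexp]
            apply mul_le_mul_of_nonneg_right _ (by positivity)
            apply mul_le_mul_of_nonneg_left _ (hpos y hy).le
            calc t ^ β ≤ t ^ (n : ℝ) := htn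
              _ = t ^ (n : ℕ) := by rw [Real.rpow_natCast]
              _ ≤ (Nat.factorial n : ℝ) * Real.exp t := hfac
        _ = (Nat.factorial n : ℝ) * φ y := by
            field_simp
  · exact mul_nonneg (by positivity) (hpos y hy).le
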